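/- Let K : ℂ → Matrix (Fin n) (Fin n) ℂ, C : ℂ → Matrix (Fin p) (Fin n) ℂ, B : ℂ → Matrix (Fin n) (Fin m) ℂ, N : ℂ → Matrix (Fin n) (Fin (n*m)) ℂ be matrix-valued functions, and σ₁, σ₂ ∈ ℂ points with K(σ₁) and K(σ₂) invertible. Suppose V contains K(σ₁)⁻¹B(σ₁) in its column span, W contains (K(σ₂)⁻¹)ᴴ(C(σ₂))ᴴ in its column span, and Wᴴ K(σ₁) V and Wᴴ K(σ₂) V are invertible. Then the reduced second-level generalized transfer function interpolates: Ĉ(σ₂) K̂(σ₂)⁻¹ N̂(σ₁) (I_m ⊗ K̂(σ₁)⁻¹ B̂(σ₁)) = C(σ₂) K(σ₂)⁻¹ N(σ₁) (I_m ⊗ K(σ₁)⁻¹ B(σ₁)). -/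

import Mathlib

open Matrix Kronecker

theorem stmt_7 {n m p r : ℕ}
    (K : ℂ → Matrix (Fin n) (Fin n) ℂ)
    (C : ℂ → Matrix (Fin p) (Fin n) ℂ)
    (B : ℂ → Matrix (Fin n) (Fin m) ℂ)
    (N : ℂ → Matrix (Fin n) (Fin m × Fin n) ℂ)
    (σ₁ σ₂ : ℂ) (hK1 : IsUnit (K σ₁)) (hK2 : IsUnit (K σ₂))
    (V W : Matrix (Fin n) (Fin r) ℂ)
    (hVspan : ∃ X, V * X = (K σ₁)⁻¹ * B σ₁)
    (hWspan : ∃ X, W * X = ((K σ₂)⁻¹)ᴴ * (C σ₂)ᴴ)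
    (hKhat1 : IsUnit (Wᴴ * K σ₁ * V)) (hKhat2 : IsUnit (Wᴴ * K σ₂ * V)) :
    (C σ₂ * V) * (Wᴴ * K σ₂ * V)⁻¹ *
        (Wᴴ * N σ₁ * ((1 : Matrix (Fin m) (Fin m) ℂ) ⊗ₖ V)) *
        ((1 : Matrix (Fin m) (Fin m) ℂ) ⊗ₖ ((Wᴴ * K σ₁ * V)⁻¹ * (Wᴴ * B σ₁)))
      = C σ₂ * (K σ₂)⁻¹ * N σ₁ *
        ((1 : Matrix (Fin m) (Fin m) ℂ) ⊗ₖ ((K σ₁)⁻¹ * B σ₁)) := by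
  obtain ⟨X, hX⟩ : ∃ X : Matrix (Fin r) (Fin m) ℂ, V * X = (K σ₁)⁻¹ * B σ₁ := hVspan
  obtain ⟨Y, hY⟩ : ∃ Y : Matrix (Fin r) (Fin p) ℂ, W * Y = ((K σ₂)⁻¹)ᴴ * (C σ₂)ᴴ := hWspan
  have hK1d : IsUnit (K σ₁).det := (Matrix.isUnit_iff_isUnit_det _).mp hK1
  have hK2d : IsUnit (K σ₂).det := (Matrix.isUnit_iff_isUnit_det _).mp hK2
  have h1d : IsUnit (Wᴴ * K σ₁ * V).det := (Matrix.isUnit_iff_isUnit_det _).mp hKhat1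
  have h2d : IsUnit (Wᴴ * K σ₂ * V).det := (Matrix.isUnit_iff_isUnit_det _).mp hKhat2
  -- Fact 1 : V * (K̂₁)⁻¹ * (Wᴴ * B σ₁) = (K σ₁)⁻¹ * B σ₁
  have fact1 : V * ((Wᴴ * K σ₁ * V)⁻¹ * (Wᴴ * B σ₁)) = (K σ₁)⁻¹ * B σ₁ := by
    have hB : Wᴴ * B σ₁ = (Wᴴ * K σ₁ * V) * X := by
      calc Wᴴ * B σ₁ = Wᴴ * (K σ₁ * ((K σ₁)⁻¹ * B σ₁)) := by
            rw [← Matrix.mul_assoc (K σ₁), Matrix.mul_nonsing_inv _ hK1d, Matrix.one_mul]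
        _ = (Wᴴ * K σ₁ * V) * X := by rw [← hX]; simp only [Matrix.mul_assoc]
    rw [hB, ← Matrix.mul_assoc, ← Matrix.mul_assoc, Matrix.mul_assoc V,
      Matrix.nonsing_inv_mul _ h1d, Matrix.mul_one, hX]
  -- Fact 2 : C σ₂ * V * (K̂₂)⁻¹ * Wᴴ = C σ₂ * (K σ₂)⁻¹
  have hYW : Yᴴ * Wᴴ = C σ₂ * (K σ₂)⁻¹ := by
    have := congrArg Matrix.conjTranspose hY
    simpa [Matrix.conjTranspose_mul] using this
  have fact2 : C σ₂ * V * (Wᴴ * K σ₂ * V)⁻¹ * Wᴴ = C σ₂ * (K σ₂)⁻¹ := by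
    have hCV : C σ₂ * V = Yᴴ * (Wᴴ * K σ₂ * V) := by
      calc C σ₂ * V = C σ₂ * (K σ₂)⁻¹ * (K σ₂ * V) := by
            rw [Matrix.mul_assoc, ← Matrix.mul_assoc ((K σ₂)⁻¹),
              Matrix.nonsing_inv_mul _ hK2d, Matrix.one_mul]
        _ = Yᴴ * (Wᴴ * K σ₂ * V) := by rw [← hYW]; simp only [Matrix.mul_assoc]
    rw [hCV, Matrix.mul_assoc Yᴴ, Matrix.mul_nonsing_inv _ h2d, Matrix.mul_one, hYW]
  -- Kronecker collapse
  have hkron : ((1 : Matrix (Fin m) (Fin m) ℂ) ⊗ₖ V) *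
      ((1 : Matrix (Fin m) (Fin m) ℂ) ⊗ₖ ((Wᴴ * K σ₁ * V)⁻¹ * (Wᴴ * B σ₁)))
      = (1 : Matrix (Fin m) (Fin m) ℂ) ⊗ₖ ((K σ₁)⁻¹ * B σ₁) := by
    rw [← Matrix.mul_kronecker_mul, Matrix.one_mul, fact1]
  calc (C σ₂ * V) * (Wᴴ * K σ₂ * V)⁻¹ *
        (Wᴴ * N σ₁ * ((1 : Matrix (Fin m) (Fin m) ℂ) ⊗ₖ V)) *
        ((1 : Matrix (Fin m) (Fin m) ℂ) ⊗ₖ ((Wᴴ * K σ₁ * V)⁻¹ * (Wᴴ * B σ₁)))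
      = (C σ₂ * V * (Wᴴ * K σ₂ * V)⁻¹ * Wᴴ) * N σ₁ *
        (((1 : Matrix (Fin m) (Fin m) ℂ) ⊗ₖ V) *
          ((1 : Matrix (Fin m) (Fin m) ℂ) ⊗ₖ ((Wᴴ * K σ₁ * V)⁻¹ * (Wᴴ * B σ₁)))) := by
        simp only [Matrix.mul_assoc]
    _ = C σ₂ * (K σ₂)⁻¹ * N σ₁ *
        ((1 : Matrix (Fin m) (Fin m) ℂ) ⊗ₖ ((K σ₁)⁻¹ * B σ₁)) := by rw [fact2, hkron]
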